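/- (Tychonoff reflection) For every topological space X there exist a topological space A that is completely regular and T1 (i.e. a T3.5 / Tychonoff space) and a continuous surjection α : X → A such that for every Tychonoff space Z and every continuous map f : X → Z there is a unique continuous map g : A → Z with g ∘ α = f. -/
import Mathlib


universe u

open unitInterval Set

/-- A map into a completely regular space is continuous as soon as its compositions with
all continuous maps to the unit interval are continuous. -/
lemma continuous_of_comp_unitInterval {A Z : Type*} [TopologicalSpace A] [TopologicalSpace Z]
    [CompletelyRegularSpace Z] (g : A → Z)
    (h : ∀ v : Z → I, Continuous v → Continuous (v ∘ g)) : Continuous g := by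
  rw [continuous_def]
  intro U hU
  rw [isOpen_iff_forall_mem_open]
  intro a ha
  obtain ⟨v, hv, hv0, hv1⟩ :=
    CompletelyRegularSpace.completely_regular (g a) Uᶜ hU.isClosed_compl (by simpa using ha)
  refine ⟨(v ∘ g) ⁻¹' ({1}ᶜ), ?_, ?_, ?_⟩
  · intro w hw
    by_contra hwU
    exact hw (hv1 hwU)
  · exact (isClosed_singleton.preimage (h v hv)).isOpen_compl
  · simp only [mem_preimage, Function.comp_apply, mem_compl_iff, mem_singleton_iff, hv0]
    exact zero_ne_one

theorem stmt9 (X : Type u) [TopologicalSpace X] :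
    ∃ (A : Type u) (tA : TopologicalSpace A),
      @T35Space A tA ∧
      ∃ α : X → A,
        @Continuous X A _ tA α ∧ Function.Surjective α ∧
        ∀ (Z : Type u) (tZ : TopologicalSpace Z), @T35Space Z tZ →
          ∀ f : X → Z, @Continuous X Z _ tZ f →
            ∃! g : A → Z, @Continuous A Z tA tZ g ∧ g ∘ α = f := by
  classical
  set ι := C(X, I) with hι
  -- evaluation map into the cube
  set e : X → (ι → I) := fun x u => u x with he
  have ce : Continuous e := continuous_pi fun u => u.continuous
  refine ⟨Set.range e, inferInstance, ?_, ?_⟩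
  · -- `range e` is T3.5
    refine { completely_regular := ?_ }
    intro a K hK haK
    obtain ⟨V, hV, hVK⟩ := isOpen_induced_iff.mp hK.isOpen_compl
    have haV : (a : ι → I) ∈ V := by
      have h1 : a ∈ Kᶜ := haK
      rw [← hVK] at h1
      exact h1
    obtain ⟨F, hF, hF0, hF1⟩ :=
      CompletelyRegularSpace.completely_regular (X := ι → I) (a : ι → I) Vᶜ
        hV.isClosed_compl (by simpa using haV)
    refine ⟨F ∘ Subtype.val, hF.comp continuous_subtype_val, hF0, ?_⟩
    intro k hk
    have hkV : (k : ι → I) ∉ V := by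
      intro hkV
      have : k ∈ Kᶜ := by rw [← hVK]; exact hkV
      exact this hk
    exact hF1 hkV
  · refine ⟨fun x => ⟨e x, Set.mem_range_self x⟩, ce.subtype_mk _, ?_, ?_⟩
    · rintro ⟨_, x, rfl⟩
      exact ⟨x, rfl⟩
    · intro Z tZ hZ f hf
      -- if `e x = e x'` then `f x = f x'`
      have key : ∀ x x' : X, e x = e x' → f x = f x' := by
        intro x x' hxx'
        by_contra hne
        obtain ⟨v, hv, hvne⟩ := separatesPoints_continuous_of_t35Space_Icc hne
        exact hvne (congrFun hxx' ⟨v ∘ f, hv.comp hf⟩)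
      set g : Set.range e → Z := fun a => f (Classical.choose a.2) with hg
      have hgα : ∀ x : X, g ⟨e x, Set.mem_range_self x⟩ = f x := fun x =>
        key _ _ (Classical.choose_spec (Set.mem_range_self (f := e) x))
      have hcontg : Continuous g := by
        apply continuous_of_comp_unitInterval
        intro v hv
        have hvg : (v ∘ g) = fun a : Set.range e => (a : ι → I) ⟨v ∘ f, hv.comp hf⟩ := by
          funext a
          have hspec := Classical.choose_spec a.2
          show v (f (Classical.choose a.2)) = (a : ι → I) ⟨v ∘ f, hv.comp hf⟩
          conv_rhs => rw [← hspec]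
          rfl
        rw [hvg]
        exact (continuous_apply _).comp continuous_subtype_val
      refine ⟨g, ⟨hcontg, funext hgα⟩, ?_⟩
      rintro g' ⟨hg'c, hg'α⟩
      funext a
      obtain ⟨x, hx⟩ := a.2
      have ha : a = ⟨e x, Set.mem_range_self x⟩ := Subtype.ext hx.symm
      rw [ha, hgα x]
      exact congrFun hg'α x
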